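/- Let W ⊆ R^n be a linear subspace whose associated linear matroid is non-separable (every pair of indices lies in a common circuit). Then for any three distinct indices i, j, k ∈ [n], the pairwise circuit imbalance satisfies κ_{ij} ≤ κ_{ik} · κ_{kj}. -/

import Mathlib

open Finset

variable {ι : Type*} [Fintype ι] [DecidableEq ι]

/-- `y` conforms to `x` if `x i * y i > 0` whenever `y i ≠ 0`. -/
def Conforms (y x : ι → ℝ) : Prop := ∀ i, y i ≠ 0 → x i * y i > 0

/-- An elementary vector of `W`: a support-minimal nonzero vector of `W`. -/
def IsElementary (W : Submodule ℝ (ι → ℝ)) (g : ι → ℝ) : Prop :=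
  g ∈ W ∧ g ≠ 0 ∧
    ∀ h ∈ W, h ≠ 0 → {i | h i ≠ 0} ⊆ {i | g i ≠ 0} → {i | h i ≠ 0} = {i | g i ≠ 0}

/-- The fractional circuit imbalance measure `κ_W`. -/
noncomputable def kappa (W : Submodule ℝ (ι → ℝ)) : ℝ :=
  sSup ({1} ∪ {t : ℝ | ∃ g : ι → ℝ, IsElementary W g ∧
    ∃ i j, g i ≠ 0 ∧ g j ≠ 0 ∧ t = |g j| / |g i|})

/-- An integer elementary vector, normalized so that the gcd of its entries is 1. -/
def IsIntElementary (W : Submodule ℝ (ι → ℝ)) (g : ι → ℤ) : Prop :=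
  IsElementary W (fun i => (g i : ℝ)) ∧ Finset.univ.gcd (fun i => (g i).natAbs) = 1

/-- The max-circuit imbalance measure `κ̄_W`. -/
noncomputable def barKappa (W : Submodule ℝ (ι → ℝ)) : ℕ :=
  sSup {k : ℕ | ∃ g : ι → ℤ, IsIntElementary W g ∧
    k = Finset.univ.sup fun i => (g i).natAbs}

/-- The lcm-circuit imbalance measure `κ̇_W`: the least positive integer divisible by
every entry of every normalized integer elementary vector. -/
noncomputable def dotKappa (W : Submodule ℝ (ι → ℝ)) : ℕ :=
  sInf {k : ℕ | 0 < k ∧ ∀ g : ι → ℤ, IsIntElementary W g → ∀ i, g i ≠ 0 → (g i).natAbs ∣ k}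

/-- A rational linear subspace: one spanned by rational vectors. -/
def IsRationalSubspace (W : Submodule ℝ (ι → ℝ)) : Prop :=
  ∃ S : Set (ι → ℚ), W = Submodule.span ℝ ((fun v : ι → ℚ => fun i => ((v i : ℝ))) '' S)

/-- The orthogonal complement of `W` in `ℝ^ι` with the standard inner product. -/
def orthComp (W : Submodule ℝ (ι → ℝ)) : Submodule ℝ (ι → ℝ) where
  carrier := {v | ∀ w ∈ W, ∑ i, v i * w i = 0}
  add_mem' := by
    intro a b ha hb w hw
    have := ha w hw
    have := hb w hw
    simp only [Set.mem_setOf_eq, Pi.add_apply, add_mul, Finset.sum_add_distrib, *]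
    ring
  zero_mem' := by intro w hw; simp
  smul_mem' := by
    intro c a ha w hw
    have h := ha w hw
    simp only [Set.mem_setOf_eq, Pi.smul_apply, smul_eq_mul, mul_assoc, ← Finset.mul_sum, h,
      mul_zero]

/-- The pairwise circuit imbalance `κ_{ij}`. -/
noncomputable def kappaPair (W : Submodule ℝ (ι → ℝ)) (i j : ι) : ℝ :=
  sSup {t : ℝ | ∃ g : ι → ℝ, IsElementary W g ∧ g i ≠ 0 ∧ g j ≠ 0 ∧ t = |g j| / |g i|}


section AuxTriangle

variable {W : Submodule ℝ (ι → ℝ)}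

set_option linter.unusedSectionVars false

/-- support finset of a vector -/
private noncomputable def sF (v : ι → ℝ) : Finset ι :=
  Finset.univ.filter fun l => v l ≠ 0

private lemma mem_sF {v : ι → ℝ} {l : ι} : l ∈ sF v ↔ v l ≠ 0 := by
  simp [sF]

/-- the part of the support of `h` outside `supp g ∪ {k}` -/
private noncomputable def outF (g : ι → ℝ) (k : ι) (h : ι → ℝ) : Finset ι :=
  Finset.univ.filter fun l => h l ≠ 0 ∧ g l = 0 ∧ l ≠ k

private lemma mem_outF {g h : ι → ℝ} {k l : ι} :
    l ∈ outF g k h ↔ h l ≠ 0 ∧ g l = 0 ∧ l ≠ k := by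
  simp [outF]

private lemma elem_neg {g : ι → ℝ} (hg : IsElementary W g) : IsElementary W (-g) := by
  obtain ⟨h1, h2, h3⟩ := hg
  have hss : {i | (-g) i ≠ 0} = {i | g i ≠ 0} := by ext l; simp
  refine ⟨neg_mem h1, neg_ne_zero.2 h2, ?_⟩
  intro h hW hne hsub
  rw [hss] at hsub ⊢
  exact h3 h hW hne hsub

private lemma elem_smul {g : ι → ℝ} (hg : IsElementary W g) {c : ℝ} (hc : c ≠ 0) :
    IsElementary W (c • g) := by
  obtain ⟨h1, h2, h3⟩ := hg
  have hss : {i | (c • g) i ≠ 0} = {i | g i ≠ 0} := by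
    ext l; simp [Pi.smul_apply, smul_eq_mul, hc]
  refine ⟨W.smul_mem c h1, ?_, ?_⟩
  · intro h0
    apply h2
    funext l
    have := congrFun h0 l
    simp only [Pi.smul_apply, smul_eq_mul, Pi.zero_apply] at this ⊢
    rcases mul_eq_zero.1 this with h | h
    · exact absurd h hc
    · exact h
  · intro h hW hne hsub
    rw [hss] at hsub ⊢
    exact h3 h hW hne hsub

/-- D0: inside the support of any nonzero `w ∈ W` there is an elementary vector. -/
private lemma exists_elem_subset {w : ι → ℝ} (hw : w ∈ W) (hw0 : w ≠ 0) :
    ∃ f, IsElementary W f ∧ ∀ l, f l ≠ 0 → w l ≠ 0 := by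
  classical
  let S : Set ℕ := {m | ∃ v, (v ∈ W ∧ v ≠ 0 ∧ ∀ l, v l ≠ 0 → w l ≠ 0) ∧ (sF v).card = m}
  have hS : S.Nonempty := ⟨(sF w).card, w, ⟨hw, hw0, fun _ h => h⟩, rfl⟩
  obtain ⟨v, ⟨hvW, hv0, hvs⟩, hvcard⟩ := Nat.sInf_mem hS
  refine ⟨v, ⟨hvW, hv0, ?_⟩, hvs⟩
  intro h hhW hh0 hsub
  have hsubF : sF h ⊆ sF v := fun l hl => mem_sF.2 (hsub (mem_sF.1 hl))
  have hle : (sF v).card ≤ (sF h).card := by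
    rw [hvcard]
    exact Nat.sInf_le ⟨h, ⟨hhW, hh0, fun l hl => hvs l (hsub hl)⟩, rfl⟩
  have heq := Finset.eq_of_subset_of_card_le hsubF hle
  ext l
  simp only [Set.mem_setOf_eq]
  constructor
  · intro hl; exact mem_sF.1 (heq ▸ mem_sF.2 hl)
  · intro hl; exact mem_sF.1 (heq.symm ▸ mem_sF.2 hl)

private lemma div_pos_of_mul_pos {a b : ℝ} (h : 0 < a * b) : 0 < a / b := by
  rcases mul_pos_iff.1 h with ⟨ha, hb⟩ | ⟨ha, hb⟩
  · exact div_pos ha hb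
  · exact div_pos_iff.2 (Or.inr ⟨ha, hb⟩)

/-- D1: every nonzero `w ∈ W` has a conformal elementary vector. -/
private lemma exists_conf_elem : ∀ N : ℕ, ∀ w : ι → ℝ, w ∈ W → w ≠ 0 → (sF w).card ≤ N →
    ∃ f, IsElementary W f ∧ Conforms f w := by
  intro N
  induction N with
  | zero =>
    intro w hw hw0 hcard
    exfalso
    obtain ⟨l, hl⟩ := Function.ne_iff.1 hw0
    have hl' : w l ≠ 0 := by simpa using hl
    have := Finset.card_pos.2 ⟨l, mem_sF.2 hl'⟩
    omega
  | succ N IH =>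
    intro w hw hw0 hcard
    obtain ⟨f₀, hf₀, hsub₀⟩ := exists_elem_subset hw hw0
    obtain ⟨l₀, hl₀'⟩ := Function.ne_iff.1 hf₀.2.1
    have hl₀ : f₀ l₀ ≠ 0 := by simpa using hl₀'
    have hwl₀ : w l₀ ≠ 0 := hsub₀ l₀ hl₀
    have core : ∀ f₁ : ι → ℝ, IsElementary W f₁ → (∀ l, f₁ l ≠ 0 → w l ≠ 0) →
        0 < f₁ l₀ * w l₀ → ∃ f, IsElementary W f ∧ Conforms f w := by
      intro f₁ hf₁ hsub hposl₀
      have hf₁l₀ : f₁ l₀ ≠ 0 := by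
        intro h0; rw [h0] at hposl₀; simp at hposl₀
      have hne : (sF f₁).Nonempty := ⟨l₀, mem_sF.2 hf₁l₀⟩
      obtain ⟨e, heM, hmax⟩ := Finset.exists_max_image (sF f₁)
        (fun l => f₁ l * w l / (w l) ^ 2) hne
      have hfe : f₁ e ≠ 0 := mem_sF.1 heM
      have hwe : w e ≠ 0 := hsub e hfe
      have hwe2 : (0:ℝ) < (w e) ^ 2 := by positivity
      have hφe : 0 < f₁ e * w e / (w e) ^ 2 := by
        refine lt_of_lt_of_le ?_ (hmax l₀ (mem_sF.2 hf₁l₀))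
        have hwl2 : (0:ℝ) < (w l₀) ^ 2 := by positivity
        exact div_pos hposl₀ hwl2
      have hfwe : 0 < f₁ e * w e := by
        rcases div_pos_iff.1 hφe with ⟨h, _⟩ | ⟨_, h2⟩
        · exact h
        · nlinarith
      set s : ℝ := w e / f₁ e with hs
      have hs0 : 0 < s := div_pos_of_mul_pos (by nlinarith)
      have hsmul : s * (f₁ e * w e) = (w e) ^ 2 := by
        rw [hs]; field_simp
      set w' : ι → ℝ := w - s • f₁ with hw'
      have hw'W : w' ∈ W := W.sub_mem hw (W.smul_mem _ hf₁.1)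
      have hkey : ∀ l, 0 ≤ w' l * w l ∧ (w' l ≠ 0 → w l ≠ 0) := by
        intro l
        by_cases hfl : f₁ l = 0
        · have hval : w' l = w l := by simp [hw', hfl]
          constructor
          · rw [hval]; exact mul_self_nonneg _
          · intro h; rwa [hval] at h
        · have hwl : w l ≠ 0 := hsub l hfl
          have hwl2 : (0:ℝ) < (w l) ^ 2 := by positivity
          have hle : f₁ l * w l / (w l) ^ 2 ≤ f₁ e * w e / (w e) ^ 2 :=
            hmax l (mem_sF.2 hfl)
          have hs2 : s * (f₁ l * w l) ≤ (w l) ^ 2 := by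
            rcases le_or_gt (f₁ l * w l) 0 with hneg | hpos
            · nlinarith
            · have h1 : (f₁ l * w l) * (w e) ^ 2 ≤ (f₁ e * w e) * (w l) ^ 2 := by
                rw [div_le_div_iff₀ hwl2 hwe2] at hle; linarith
              nlinarith [mul_le_mul_of_nonneg_left h1 hs0.le]
          have hval : w' l * w l = (w l) ^ 2 - s * (f₁ l * w l) := by
            simp only [hw', Pi.sub_apply, Pi.smul_apply, smul_eq_mul]
            ring
          constructor
          · rw [hval]; linarith
          · intro _; exact hwl
      have hw'e : w' e = 0 := by
        simp only [hw', Pi.sub_apply, Pi.smul_apply, smul_eq_mul, hs]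
        field_simp
        ring
      by_cases hw'0 : w' = 0
      · refine ⟨f₁, hf₁, ?_⟩
        intro l hl
        have hwl : w l = s * f₁ l := by
          have := congrFun hw'0 l
          simp only [hw', Pi.sub_apply, Pi.smul_apply, smul_eq_mul, Pi.zero_apply] at this
          linarith
        rw [hwl]
        have : (0:ℝ) < f₁ l ^ 2 := by positivity
        nlinarith
      · have hsubF : sF w' ⊆ sF w := fun l hl => mem_sF.2 ((hkey l).2 (mem_sF.1 hl))
        have hssub : sF w' ⊂ sF w := by
          refine ⟨hsubF, fun hsup => ?_⟩
          exact (mem_sF.1 (hsup (mem_sF.2 hwe))) hw'e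
        have hcard' : (sF w').card ≤ N := by
          have := Finset.card_lt_card hssub
          omega
        obtain ⟨f, hf, hcf⟩ := IH w' hw'W hw'0 hcard'
        refine ⟨f, hf, ?_⟩
        intro l hl
        have h1 := hcf l hl
        have h2 : w' l ≠ 0 := by
          intro h0; rw [h0] at h1; simp at h1
        have h3 := (hkey l).1
        have h4 : 0 < w' l * w l := lt_of_le_of_ne h3 (Ne.symm (mul_ne_zero h2 ((hkey l).2 h2)))
        nlinarith [mul_pos h4 h1, sq_nonneg (w' l)]
    rcases (mul_ne_zero hl₀ hwl₀).lt_or_gt with hneg | hpos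
    · refine core (-f₀) (elem_neg hf₀) (fun l hl => hsub₀ l (by simpa using hl)) ?_
      simp only [Pi.neg_apply, neg_mul]
      linarith
    · exact core f₀ hf₀ hsub₀ hpos

/-- D2: conformal circuit decomposition. -/
private lemma exists_decomp : ∀ N : ℕ, ∀ w : ι → ℝ, w ∈ W → w ≠ 0 → (sF w).card ≤ N →
    ∃ (m : ℕ) (F : Fin m → ι → ℝ),
      (∀ t, IsElementary W (F t) ∧ Conforms (F t) w) ∧ ∑ t, F t = w := by
  intro N
  induction N with
  | zero =>
    intro w hw hw0 hcard
    exfalso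
    obtain ⟨l, hl⟩ := Function.ne_iff.1 hw0
    have hl' : w l ≠ 0 := by simpa using hl
    have := Finset.card_pos.2 ⟨l, mem_sF.2 hl'⟩
    omega
  | succ N IH =>
    intro w hw hw0 hcard
    obtain ⟨f, hf, hcf⟩ := exists_conf_elem (N + 1) w hw hw0 hcard
    have hne : (sF f).Nonempty := by
      obtain ⟨l, hl⟩ := Function.ne_iff.1 hf.2.1
      exact ⟨l, mem_sF.2 (by simpa using hl)⟩
    obtain ⟨e, heM, hmin⟩ := Finset.exists_min_image (sF f) (fun l => w l / f l) hne
    have hfe : f e ≠ 0 := mem_sF.1 heM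
    set α : ℝ := w e / f e with hα
    have hα0 : 0 < α := div_pos_of_mul_pos (hcf e hfe)
    set w' : ι → ℝ := w - α • f with hw'
    have hw'W : w' ∈ W := W.sub_mem hw (W.smul_mem _ hf.1)
    have hconfαf : Conforms (α • f) w := by
      intro l hl
      have hfl : f l ≠ 0 := by
        intro h0; apply hl; simp [Pi.smul_apply, h0]
      have := hcf l hfl
      simp only [Pi.smul_apply, smul_eq_mul]
      nlinarith
    have hkey : ∀ l, 0 ≤ w' l * w l ∧ (w' l ≠ 0 → w l ≠ 0) := by
      intro l
      by_cases hfl : f l = 0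
      · have hval : w' l = w l := by simp [hw', hfl]
        exact ⟨by rw [hval]; exact mul_self_nonneg _, fun h => by rwa [hval] at h⟩
      · have hmul : 0 < w l * f l := hcf l hfl
        have hwl : w l ≠ 0 := by intro h0; rw [h0] at hmul; simp at hmul
        have hll : α ≤ w l / f l := hmin l (mem_sF.2 hfl)
        have h2 : α * (f l * w l) ≤ (w l) ^ 2 := by
          have h3 : (w l / f l) * (f l * w l) = (w l) ^ 2 := by
            field_simp
          nlinarith [mul_le_mul_of_nonneg_right hll (by nlinarith : (0:ℝ) ≤ f l * w l)]
        have hval : w' l * w l = (w l) ^ 2 - α * (f l * w l) := by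
          simp only [hw', Pi.sub_apply, Pi.smul_apply, smul_eq_mul]
          ring
        exact ⟨by rw [hval]; linarith, fun _ => hwl⟩
    have hw'e : w' e = 0 := by
      simp only [hw', Pi.sub_apply, Pi.smul_apply, smul_eq_mul, hα]
      field_simp
      ring
    by_cases hw'0 : w' = 0
    · refine ⟨1, fun _ => α • f, fun t => ⟨elem_smul hf hα0.ne', hconfαf⟩, ?_⟩
      have : w = α • f := by
        funext l
        have := congrFun hw'0 l
        simp only [hw', Pi.sub_apply, Pi.zero_apply] at this
        linarith [this]
      simp [this]
    · have hsubF : sF w' ⊆ sF w := fun l hl => mem_sF.2 ((hkey l).2 (mem_sF.1 hl))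
      have hwe : w e ≠ 0 := by
        intro h0
        have := hcf e hfe
        rw [h0] at this; simp at this
      have hssub : sF w' ⊂ sF w := by
        refine ⟨hsubF, fun hsup => ?_⟩
        exact (mem_sF.1 (hsup (mem_sF.2 hwe))) hw'e
      have hcard' : (sF w').card ≤ N := by
        have := Finset.card_lt_card hssub
        omega
      obtain ⟨m, F, hFt, hsum⟩ := IH w' hw'W hw'0 hcard'
      refine ⟨m + 1, Fin.cons (α • f) F, ?_, ?_⟩
      · intro t
        refine Fin.cases ?_ ?_ t
        · simpa using ⟨elem_smul hf hα0.ne', hconfαf⟩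
        · intro t'
          simp only [Fin.cons_succ]
          refine ⟨(hFt t').1, ?_⟩
          intro l hl
          have h1 := (hFt t').2 l hl
          have h2 : w' l ≠ 0 := by intro h0; rw [h0] at h1; simp at h1
          have h3 := (hkey l).1
          have h4 : 0 < w' l * w l :=
            lt_of_le_of_ne h3 (Ne.symm (mul_ne_zero h2 ((hkey l).2 h2)))
          nlinarith [mul_pos h4 h1, sq_nonneg (w' l)]
      · rw [Fin.sum_cons, hsum]
        funext l
        simp only [Pi.add_apply, hw', Pi.sub_apply]
        ring

/-- extract a conformal component with a prescribed nonzero coordinate -/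
private lemma exists_conf_comp {w : ι → ℝ} (hw : w ∈ W) {x : ι} (hx : w x ≠ 0) :
    ∃ f, IsElementary W f ∧ Conforms f w ∧ f x ≠ 0 := by
  have hw0 : w ≠ 0 := fun h0 => hx (by rw [h0]; rfl)
  obtain ⟨m, F, hF, hsum⟩ := exists_decomp (sF w).card w hw hw0 le_rfl
  have happ : ∑ t, F t x = w x := by
    have := congrFun hsum x
    simpa [Finset.sum_apply] using this
  have hxx : ∑ t, F t x ≠ 0 := by rw [happ]; exact hx
  obtain ⟨t, _, ht⟩ := Finset.exists_ne_zero_of_sum_ne_zero hxx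
  exact ⟨F t, (hF t).1, (hF t).2, ht⟩

/-- two elementary vectors with the same support have equal coordinate ratios -/
private lemma elem_ratio_eq {g h : ι → ℝ} (hg : IsElementary W g) (hh : IsElementary W h)
    (hsupp : {l | g l ≠ 0} = {l | h l ≠ 0}) (x y : ι) (hx : g x ≠ 0) :
    |h y| / |h x| = |g y| / |g x| := by
  have hhx : h x ≠ 0 := by
    have : x ∈ {l | h l ≠ 0} := hsupp ▸ (show x ∈ {l | g l ≠ 0} from hx)
    exact this
  set c : ℝ := h x / g x with hc
  have hc0 : c ≠ 0 := div_ne_zero hhx hx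
  have hzero : h - c • g = 0 := by
    by_contra hne
    have hWu : h - c • g ∈ W := W.sub_mem hh.1 (W.smul_mem _ hg.1)
    have hsub : {l | (h - c • g) l ≠ 0} ⊆ {l | g l ≠ 0} := by
      intro l hl
      simp only [Set.mem_setOf_eq, Pi.sub_apply, Pi.smul_apply, smul_eq_mul] at hl
      by_contra hgl
      have hhl : h l = 0 := by
        by_contra hhl
        exact hgl ((hsupp.symm ▸ (show l ∈ {l | h l ≠ 0} from hhl)))
      apply hl
      rw [not_not.1 hgl, hhl]; ring
    have heq := hg.2.2 _ hWu hne hsub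
    have hx0 : (h - c • g) x = 0 := by
      simp only [Pi.sub_apply, Pi.smul_apply, smul_eq_mul, hc]
      field_simp
      ring
    have : x ∈ {l | (h - c • g) l ≠ 0} := heq.symm ▸ (show x ∈ {l | g l ≠ 0} from hx)
    exact this hx0
  have hy : h y = c * g y := by
    have := congrFun hzero y
    simp only [Pi.sub_apply, Pi.smul_apply, smul_eq_mul, Pi.zero_apply] at this
    linarith
  have hx2 : h x = c * g x := by
    have := congrFun hzero x
    simp only [Pi.sub_apply, Pi.smul_apply, smul_eq_mul, Pi.zero_apply] at this
    linarith
  rw [hy, hx2, abs_mul, abs_mul, mul_div_mul_left _ _ (abs_ne_zero.2 hc0)]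

private lemma kappa_bdd (W : Submodule ℝ (ι → ℝ)) (x y : ι) :
    BddAbove {t : ℝ | ∃ g : ι → ℝ, IsElementary W g ∧ g x ≠ 0 ∧ g y ≠ 0 ∧ t = |g y| / |g x|} := by
  classical
  apply Set.Finite.bddAbove
  apply Set.Finite.subset (Set.finite_range (fun s : Finset ι =>
    if hs : ∃ g : ι → ℝ, (IsElementary W g ∧ g x ≠ 0 ∧ g y ≠ 0) ∧ sF g = s then
      |hs.choose y| / |hs.choose x| else 0))
  rintro t ⟨g, hg, hx, hy, rfl⟩
  refine ⟨sF g, ?_⟩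
  beta_reduce
  have hex : ∃ g' : ι → ℝ, (IsElementary W g' ∧ g' x ≠ 0 ∧ g' y ≠ 0) ∧ sF g' = sF g :=
    ⟨g, ⟨hg, hx, hy⟩, rfl⟩
  rw [dif_pos hex]
  obtain ⟨⟨hg', hx', hy'⟩, hs'⟩ := hex.choose_spec
  have hsupp : {l | g l ≠ 0} = {l | hex.choose l ≠ 0} := by
    ext l
    simp only [Set.mem_setOf_eq]
    rw [← mem_sF, ← mem_sF, hs']
  exact elem_ratio_eq hg hg' hsupp x y hx

private lemma ratio_le_kappa {f : ι → ℝ} (hf : IsElementary W f) {x y : ι}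
    (hx : f x ≠ 0) (hy : f y ≠ 0) : |f y| / |f x| ≤ kappaPair W x y :=
  le_csSup (kappa_bdd W x y) ⟨f, hf, hx, hy, rfl⟩

private lemma kappa_pos {x y : ι} (h : ∃ f, IsElementary W f ∧ f x ≠ 0 ∧ f y ≠ 0) :
    0 < kappaPair W x y := by
  obtain ⟨f, hf, hx, hy⟩ := h
  exact lt_of_lt_of_le (div_pos (abs_pos.2 hy) (abs_pos.2 hx)) (ratio_le_kappa hf hx hy)

/-- support of a conformal part of `h e • g - g e • h` is inside `supp g ∪ supp h` -/
private lemma conf_supp {g h f : ι → ℝ} {e l : ι}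
    (hcf : Conforms f (h e • g - g e • h)) (hfl : f l ≠ 0) :
    g l ≠ 0 ∨ h l ≠ 0 := by
  have h1 := hcf l hfl
  by_contra hc
  push_neg at hc
  rw [show (h e • g - g e • h) l = h e * g l - g e * h l from rfl, hc.1, hc.2] at h1
  simp at h1

private lemma conf_ne {w f : ι → ℝ} (hcf : Conforms f w) {l : ι} (hfl : f l ≠ 0) :
    w l ≠ 0 := by
  intro h0
  have := hcf l hfl
  rw [h0] at this; simp at this

/-- T1: if `h` minimizes the support outside `supp g ∪ {k}` among elementary vectors through
`k` meeting `supp g`, then every conformal component of `h e • g - g e • h` contains `k`. -/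
private lemma T1 {g h : ι → ℝ} {k : ι} (hg : IsElementary W g) (hgk : g k = 0)
    (hh : IsElementary W h) (hhk : h k ≠ 0)
    (hmin : ∀ h', IsElementary W h' → h' k ≠ 0 → (∃ e', g e' ≠ 0 ∧ h' e' ≠ 0) →
      (outF g k h).card ≤ (outF g k h').card)
    {e : ι} (hge : g e ≠ 0) (hhe : h e ≠ 0)
    {f : ι → ℝ} (hf : IsElementary W f) (hcf : Conforms f (h e • g - g e • h)) :
    f k ≠ 0 := by
  intro hfk
  have hwe : (h e • g - g e • h) e = 0 := by
    show h e * g e - g e * h e = 0; ring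
  by_cases hex : ∃ l, f l ≠ 0 ∧ g l = 0 ∧ l ≠ k
  · obtain ⟨l, hfl, hgl, hlk⟩ := hex
    have hhl : h l ≠ 0 := by
      rcases conf_supp hcf hfl with h1 | h1
      · exact absurd hgl h1
      · exact h1
    set z : ι → ℝ := h - (h l / f l) • f with hz
    have hzW : z ∈ W := W.sub_mem hh.1 (W.smul_mem _ hf.1)
    have hzk : z k ≠ 0 := by
      have : z k = h k := by
        simp only [hz, Pi.sub_apply, Pi.smul_apply, smul_eq_mul, hfk, mul_zero, sub_zero]
      rw [this]; exact hhk
    obtain ⟨u, hu, hcu, huk⟩ := exists_conf_comp hzW hzk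
    have hzl : z l = 0 := by
      simp only [hz, Pi.sub_apply, Pi.smul_apply, smul_eq_mul]
      field_simp
      ring
    have hul : u l = 0 := by
      by_contra hul
      exact (conf_ne hcu hul) hzl
    have hzsub : ∀ x, z x ≠ 0 → (h x ≠ 0 ∨ f x ≠ 0) := by
      intro x hx
      by_contra hc
      push_neg at hc
      apply hx
      simp only [hz, Pi.sub_apply, Pi.smul_apply, smul_eq_mul, hc.1, hc.2, mul_zero, sub_zero]
    have husub : ∀ x, u x ≠ 0 → (g x ≠ 0 ∨ h x ≠ 0) := by
      intro x hx
      rcases hzsub x (conf_ne hcu hx) with h1 | h1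
      · exact Or.inr h1
      · exact conf_supp hcf h1
    by_cases hmeet : ∃ e', g e' ≠ 0 ∧ u e' ≠ 0
    · have hsubout : outF g k u ⊆ (outF g k h).erase l := by
        intro x hx
        rw [mem_outF] at hx
        obtain ⟨hux, hgx, hxk⟩ := hx
        rw [Finset.mem_erase, mem_outF]
        have hxl : x ≠ l := by
          intro h0; rw [h0] at hux; exact hux hul
        refine ⟨hxl, ?_, hgx, hxk⟩
        rcases husub x hux with h1 | h1
        · exact absurd hgx h1
        · exact h1
      have hlin : l ∈ outF g k h := mem_outF.2 ⟨hhl, hgl, hlk⟩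
      have hlt : (outF g k u).card < (outF g k h).card :=
        lt_of_le_of_lt (Finset.card_le_card hsubout) (Finset.card_erase_lt_of_mem hlin)
      exact absurd (hmin u hu huk hmeet) (not_le.2 hlt)
    · push_neg at hmeet
      have hsub : {x | u x ≠ 0} ⊆ {x | h x ≠ 0} := by
        intro x hx
        rcases husub x hx with h1 | h1
        · exact absurd (hmeet x h1) hx
        · exact h1
      have heq := hh.2.2 u hu.1 hu.2.1 hsub
      have : l ∈ {x | u x ≠ 0} := heq.symm ▸ (show l ∈ {x | h x ≠ 0} from hhl)
      exact this hul
  · push_neg at hex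
    have hsub : {x | f x ≠ 0} ⊆ {x | g x ≠ 0} := by
      intro x hx
      by_contra hgx
      have hxk : x = k := hex x hx (not_not.1 hgx)
      rw [hxk] at hx
      exact hx hfk
    have heq := hg.2.2 f hf.1 hf.2.1 hsub
    have hfe : f e = 0 := by
      by_contra hfe
      exact (conf_ne hcf hfe) hwe
    have : e ∈ {x | f x ≠ 0} := heq.symm ▸ (show e ∈ {x | g x ≠ 0} from hge)
    exact this hfe

private lemma comp_out {g h f : ι → ℝ} {k e : ι}
    (hcf : Conforms f (h e • g - g e • h)) : outF g k f ⊆ outF g k h := by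
  intro x hx
  rw [mem_outF] at hx ⊢
  obtain ⟨hfx, hgx, hxk⟩ := hx
  refine ⟨?_, hgx, hxk⟩
  rcases conf_supp hcf hfx with h1 | h1
  · exact absurd hgx h1
  · exact h1

/-- one exchange step: produce a new minimal circuit through k with a prescribed coordinate -/
private lemma step_lemma {g h : ι → ℝ} {k : ι} (hg : IsElementary W g) (hgk : g k = 0)
    (hh : IsElementary W h) (hhk : h k ≠ 0)
    (hmin : ∀ h', IsElementary W h' → h' k ≠ 0 → (∃ e', g e' ≠ 0 ∧ h' e' ≠ 0) →
      (outF g k h).card ≤ (outF g k h').card)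
    {e : ι} (hge : g e ≠ 0) (hhe : h e ≠ 0) {x : ι} (hx : (h e • g - g e • h) x ≠ 0) :
    ∃ f, IsElementary W f ∧ f k ≠ 0 ∧ f x ≠ 0 ∧ Conforms f (h e • g - g e • h) ∧
      (∀ h', IsElementary W h' → h' k ≠ 0 → (∃ e', g e' ≠ 0 ∧ h' e' ≠ 0) →
        (outF g k f).card ≤ (outF g k h').card) := by
  have hwW : h e • g - g e • h ∈ W := W.sub_mem (W.smul_mem _ hg.1) (W.smul_mem _ hh.1)
  obtain ⟨f, hf, hcf, hfx⟩ := exists_conf_comp hwW hx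
  have hfk := T1 hg hgk hh hhk hmin hge hhe hf hcf
  exact ⟨f, hf, hfk, hfx, hcf,
    fun h' a b c => le_trans (Finset.card_le_card (comp_out hcf)) (hmin h' a b c)⟩

/-- summing a conformal decomposition whose every part contains k -/
private lemma decomp_bound {w : ι → ℝ} {k j : ι} {m : ℕ} {F : Fin m → ι → ℝ}
    (hF : ∀ t, IsElementary W (F t) ∧ Conforms (F t) w)
    (hFk : ∀ t, F t k ≠ 0) (hsum : ∑ t, F t = w) (hwk : w k ≠ 0) (hwj : w j ≠ 0) :
    |w j| ≤ kappaPair W k j * |w k| := by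
  have happly : ∀ x, ∑ t, F t x = w x := by
    intro x
    have := congrFun hsum x
    simpa [Finset.sum_apply] using this
  have hjex : ∃ t : Fin m, F t j ≠ 0 := by
    by_contra hc
    push_neg at hc
    apply hwj
    rw [← happly j]
    exact Finset.sum_eq_zero fun t _ => hc t
  obtain ⟨t₀, ht₀⟩ := hjex
  have hκpos : 0 < kappaPair W k j := kappa_pos ⟨F t₀, (hF t₀).1, hFk t₀, ht₀⟩
  have habs : ∀ t, |F t j| ≤ kappaPair W k j * |F t k| := by
    intro t
    by_cases hj : F t j = 0
    · rw [hj, abs_zero]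
      exact mul_nonneg hκpos.le (abs_nonneg _)
    · have h1 := ratio_le_kappa (W := W) (hF t).1 (hFk t) hj
      rw [div_le_iff₀ (abs_pos.2 (hFk t))] at h1
      linarith
  have hsign : ∀ t, 0 < w k * F t k := fun t => (hF t).2 k (hFk t)
  have hsumk : ∑ t, |F t k| = |w k| := by
    rcases hwk.lt_or_gt with hneg | hpos
    · have hlt : ∀ t, F t k < 0 := by
        intro t
        by_contra hcc
        push_neg at hcc
        nlinarith [hsign t]
      have h1 : ∀ t : Fin m, |F t k| = -(F t k) := fun t => abs_of_neg (hlt t)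
      rw [abs_of_neg hneg]
      simp_rw [h1]
      rw [Finset.sum_neg_distrib, happly k]
    · have hlt : ∀ t, 0 < F t k := by
        intro t
        by_contra hcc
        push_neg at hcc
        nlinarith [hsign t]
      have h1 : ∀ t : Fin m, |F t k| = F t k := fun t => abs_of_pos (hlt t)
      rw [abs_of_pos hpos]
      simp_rw [h1]
      exact happly k
  calc |w j| = |∑ t, F t j| := by rw [happly j]
    _ ≤ ∑ t, |F t j| := Finset.abs_sum_le_sum_abs _ _
    _ ≤ ∑ t, kappaPair W k j * |F t k| := Finset.sum_le_sum fun t _ => habs t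
    _ = kappaPair W k j * ∑ t, |F t k| := by rw [Finset.mul_sum]
    _ = kappaPair W k j * |w k| := by rw [hsumk]

/-- the final computation with a minimal circuit h₂ through i and k avoiding j -/
private lemma finale {g h₂ : ι → ℝ} {i j k : ι} (hg : IsElementary W g)
    (hgi : g i ≠ 0) (hgj : g j ≠ 0) (hgk : g k = 0)
    (hE : IsElementary W h₂) (hi₂ : h₂ i ≠ 0) (hk₂ : h₂ k ≠ 0) (hj₂ : h₂ j = 0)
    (hmin : ∀ h'', IsElementary W h'' → h'' k ≠ 0 → (∃ e, g e ≠ 0 ∧ h'' e ≠ 0) →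
        (outF g k h₂).card ≤ (outF g k h'').card) :
    |g j| / |g i| ≤ kappaPair W i k * kappaPair W k j := by
  have hwW : h₂ i • g - g i • h₂ ∈ W := W.sub_mem (W.smul_mem _ hg.1) (W.smul_mem _ hE.1)
  have hwj : (h₂ i • g - g i • h₂) j = h₂ i * g j := by
    show h₂ i * g j - g i * h₂ j = h₂ i * g j
    rw [hj₂]; ring
  have hwk : (h₂ i • g - g i • h₂) k = -(g i * h₂ k) := by
    show h₂ i * g k - g i * h₂ k = -(g i * h₂ k)
    rw [hgk]; ring
  have hwj0 : (h₂ i • g - g i • h₂) j ≠ 0 := by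
    rw [hwj]; exact mul_ne_zero hi₂ hgj
  have hwk0 : (h₂ i • g - g i • h₂) k ≠ 0 := by
    rw [hwk]; exact neg_ne_zero.2 (mul_ne_zero hgi hk₂)
  have hw0 : h₂ i • g - g i • h₂ ≠ 0 := by
    intro h0; rw [h0] at hwk0; exact hwk0 rfl
  obtain ⟨m, F, hF, hsum⟩ :=
    exists_decomp (W := W) (sF (h₂ i • g - g i • h₂)).card _ hwW hw0 le_rfl
  have hFk : ∀ t, F t k ≠ 0 := fun t => T1 hg hgk hE hk₂ hmin hgi hi₂ (hF t).1 (hF t).2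
  have hbound := decomp_bound hF hFk hsum hwk0 hwj0
  have hA := ratio_le_kappa (W := W) hE hi₂ hk₂
  have hB : |(h₂ i • g - g i • h₂) j| / |(h₂ i • g - g i • h₂) k| ≤ kappaPair W k j :=
    (div_le_iff₀ (abs_pos.2 hwk0)).2 hbound
  have hkey : (|h₂ k| / |h₂ i|) * (|(h₂ i • g - g i • h₂) j| / |(h₂ i • g - g i • h₂) k|)
      = |g j| / |g i| := by
    rw [hwj, hwk, abs_neg, abs_mul, abs_mul]
    have h1 : |h₂ i| ≠ 0 := abs_ne_zero.2 hi₂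
    have h2 : |h₂ k| ≠ 0 := abs_ne_zero.2 hk₂
    have h3 : |g i| ≠ 0 := abs_ne_zero.2 hgi
    field_simp
  have hApos : (0:ℝ) ≤ |h₂ k| / |h₂ i| := by positivity
  calc |g j| / |g i|
      = (|h₂ k| / |h₂ i|) * (|(h₂ i • g - g i • h₂) j| / |(h₂ i • g - g i • h₂) k|) := hkey.symm
    _ ≤ kappaPair W i k * kappaPair W k j :=
        mul_le_mul hA hB (by positivity) (le_trans hApos hA)

/-- the central inequality, for every elementary g through i and j -/
private lemma key_ineq {i j k : ι}
    (hik_ex : ∃ h, IsElementary W h ∧ h i ≠ 0 ∧ h k ≠ 0)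
    {g : ι → ℝ} (hg : IsElementary W g) (hgi : g i ≠ 0) (hgj : g j ≠ 0) :
    |g j| / |g i| ≤ kappaPair W i k * kappaPair W k j := by
  by_cases hgk : g k = 0
  case neg =>
    have h1 := ratio_le_kappa (W := W) hg hgi hgk
    have h2 := ratio_le_kappa (W := W) hg hgk hgj
    have heq : |g j| / |g i| = (|g k| / |g i|) * (|g j| / |g k|) := by
      have h3 : |g i| ≠ 0 := abs_ne_zero.2 hgi
      have h4 : |g k| ≠ 0 := abs_ne_zero.2 hgk
      field_simp
    rw [heq]
    exact mul_le_mul h1 h2 (by positivity) (le_trans (by positivity) h1)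
  case pos =>
    obtain ⟨h', hh', hi', hk'⟩ := hik_ex
    set S : Set ℕ := {m | ∃ h, (IsElementary W h ∧ h k ≠ 0 ∧ ∃ e, g e ≠ 0 ∧ h e ≠ 0) ∧
      (outF g k h).card = m} with hSdef
    have hSne : S.Nonempty := ⟨(outF g k h').card, h', ⟨hh', hk', ⟨i, hgi, hi'⟩⟩, rfl⟩
    obtain ⟨h₀, ⟨hE₀, hk₀, he₀⟩, hcard₀⟩ := Nat.sInf_mem hSne
    have hmin₀ : ∀ h'', IsElementary W h'' → h'' k ≠ 0 → (∃ e, g e ≠ 0 ∧ h'' e ≠ 0) →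
        (outF g k h₀).card ≤ (outF g k h'').card := by
      intro h'' a b c
      rw [hcard₀]
      exact Nat.sInf_le ⟨h'', ⟨a, b, c⟩, rfl⟩
    obtain ⟨h₁, hE₁, hk₁, hi₁, hmin₁⟩ :
        ∃ h₁, IsElementary W h₁ ∧ h₁ k ≠ 0 ∧ h₁ i ≠ 0 ∧
          (∀ h'', IsElementary W h'' → h'' k ≠ 0 → (∃ e, g e ≠ 0 ∧ h'' e ≠ 0) →
            (outF g k h₁).card ≤ (outF g k h'').card) := by
      by_cases hi₀ : h₀ i ≠ 0
      · exact ⟨h₀, hE₀, hk₀, hi₀, hmin₀⟩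
      · push_neg at hi₀
        obtain ⟨e₀, hge₀, he₀'⟩ := he₀
        have hwx : (h₀ e₀ • g - g e₀ • h₀) i ≠ 0 := by
          show h₀ e₀ * g i - g e₀ * h₀ i ≠ 0
          rw [hi₀, mul_zero, sub_zero]
          exact mul_ne_zero he₀' hgi
        obtain ⟨f, hf, hfk, hfi, hcf, hminf⟩ :=
          step_lemma hg hgk hE₀ hk₀ hmin₀ hge₀ he₀' hwx
        exact ⟨f, hf, hfk, hfi, hminf⟩
    by_cases hj₁ : h₁ j = 0
    case pos => exact finale hg hgi hgj hgk hE₁ hi₁ hk₁ hj₁ hmin₁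
    case neg =>
      by_cases hcross : h₁ j * g i = g j * h₁ i
      · have e1 := ratio_le_kappa (W := W) hE₁ hi₁ hk₁
        have e2 := ratio_le_kappa (W := W) hE₁ hk₁ hj₁
        have heq : |g j| / |g i| = (|h₁ k| / |h₁ i|) * (|h₁ j| / |h₁ k|) := by
          have habs : |h₁ j| * |g i| = |g j| * |h₁ i| := by
            rw [← abs_mul, ← abs_mul, hcross]
          have h3 : |g i| ≠ 0 := abs_ne_zero.2 hgi
          have h4 : |h₁ i| ≠ 0 := abs_ne_zero.2 hi₁
          have h5 : |h₁ k| ≠ 0 := abs_ne_zero.2 hk₁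
          field_simp
          linear_combination (-1) * habs
        rw [heq]
        exact mul_le_mul e1 e2 (by positivity) (le_trans (by positivity) e1)
      · have hqi : (h₁ j • g - g j • h₁) i ≠ 0 := by
          show h₁ j * g i - g j * h₁ i ≠ 0
          exact sub_ne_zero.2 hcross
        obtain ⟨f, hf, hfk, hfi, hcf, hminf⟩ :=
          step_lemma hg hgk hE₁ hk₁ hmin₁ hgj hj₁ hqi
        have hfj : f j = 0 := by
          by_contra hfj
          have hqj : (h₁ j • g - g j • h₁) j = 0 := by
            show h₁ j * g j - g j * h₁ j = 0; ring
          exact (conf_ne hcf hfj) hqj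
        exact finale hg hgi hgj hgk hf hfi hfk hfj hminf

end AuxTriangle

/-- the multiplicative triangle inequality `κ_{ij} ≤ κ_{ik} · κ_{kj}` for a
non-separable subspace. -/
theorem kappaPair_triangle {n : ℕ} (W : Submodule ℝ (Fin n → ℝ))
    (hconn : ∀ i j : Fin n, ∃ g : Fin n → ℝ, IsElementary W g ∧ g i ≠ 0 ∧ g j ≠ 0)
    (i j k : Fin n) (hij : i ≠ j) (hik : i ≠ k) (hjk : j ≠ k) :
    kappaPair W i j ≤ kappaPair W i k * kappaPair W k j := by
  have hp1 : 0 < kappaPair W i k := kappa_pos (hconn i k)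
  have hp2 : 0 < kappaPair W k j := kappa_pos (hconn k j)
  unfold kappaPair
  apply Real.sSup_le
  · rintro t ⟨g, hg, hgi, hgj, rfl⟩
    exact key_ineq (hconn i k) hg hgi hgj
  · exact mul_nonneg hp1.le hp2.le
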